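/- arXiv:2508.00337 — 3 statements merged into one kernel-verified Lean document; each statement's English description precedes it below -/
import Mathlib

section
/- Let n ≥ 1 and s ∈ (0,1). With f_s as above, lim_{R → ∞} f_s(R) = −H^s_{B_1}(e₁) < 0, where H^s_{B_1}(e₁) := p.v. ∫_{ℝ^n} (χ_{B_1^c}(y) − χ_{B_1}(y)) |e₁ − y|^{-(n+s)} dy > 0 is the (unnormalised) fractional mean curvature of the unit ball at a boundary point. -/
open Metric MeasureTheory Set Filter

private lemma aux_rpow_bound {t δ p : ℝ} (hδ : 0 < δ) (hδt : δ ≤ t) (hp : 0 ≤ p) :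
    t ^ (-p) ≤ (1 + δ⁻¹) ^ p * (1 + t) ^ (-p) := by
  have ht : 0 < t := hδ.trans_le hδt
  have h1 : (1 + t) ^ p ≤ (1 + δ⁻¹) ^ p * t ^ p := by
    rw [← Real.mul_rpow (by positivity) ht.le]
    apply Real.rpow_le_rpow (by positivity) _ hp
    have h2 : 1 ≤ t / δ := (one_le_div hδ).2 hδt
    have h3 : (1 + δ⁻¹) * t = t + t / δ := by field_simp
    rw [h3]; linarith
  rw [Real.rpow_neg ht.le, Real.rpow_neg (by positivity)]
  calc (t ^ p)⁻¹ = (1 + δ⁻¹) ^ p * ((1 + δ⁻¹) ^ p * t ^ p)⁻¹ := by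
        rw [mul_inv, ← mul_assoc, mul_inv_cancel₀ (by positivity), one_mul]
    _ ≤ (1 + δ⁻¹) ^ p * ((1 + t) ^ p)⁻¹ := by gcongr

private lemma aux_integrableOn_K {n : ℕ} {p : ℝ} (hp : (n : ℝ) < p)
    (a : EuclideanSpace ℝ (Fin n)) {δ : ℝ} (hδ : 0 < δ) :
    IntegrableOn (fun y : EuclideanSpace ℝ (Fin n) => ‖a - y‖ ^ (-p)) (ball a δ)ᶜ := by
  have hp0 : 0 ≤ p := le_trans (Nat.cast_nonneg n) hp.le
  have hfin : (Module.finrank ℝ (EuclideanSpace ℝ (Fin n)) : ℝ) < p := by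
    rwa [finrank_euclideanSpace_fin]
  have h1 : Integrable (fun y : EuclideanSpace ℝ (Fin n) => (1 + ‖a - y‖) ^ (-p)) :=
    (integrable_one_add_norm hfin).comp_sub_left a
  have hm : Measurable (fun y : EuclideanSpace ℝ (Fin n) => ‖a - y‖ ^ (-p)) := by fun_prop
  refine Integrable.mono' ((h1.const_mul ((1 + δ⁻¹) ^ p)).integrableOn) hm.aestronglyMeasurable ?_
  rw [ae_restrict_iff' measurableSet_ball.compl]
  filter_upwards with y hy
  have hyd : δ ≤ ‖a - y‖ := by
    rw [mem_compl_iff, mem_ball, dist_eq_norm, not_lt, ← norm_sub_rev] at hy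
    exact hy
  rw [Real.norm_eq_abs, abs_of_nonneg (Real.rpow_nonneg (norm_nonneg _) _)]
  exact aux_rpow_bound hδ hyd hp0

/-- As `R → ∞`, `f_s(R)` tends to `-H^s_{B₁}(e₁)`, where `H^s_{B₁}(e₁) > 0` is the
fractional mean curvature of the unit ball at `e₁` (both quantities defined as principal
values at the singular point `e₁`). -/
theorem annulus_curvature_limit (n : ℕ) (hn : 1 ≤ n) (s : ℝ) (hs : 0 < s) (hs1 : s < 1)
    (e₁ : EuclideanSpace ℝ (Fin n)) (he₁ : e₁ = EuclideanSpace.single ⟨0, hn⟩ 1)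
    (f : ℝ → ℝ) (H : ℝ)
    (hf : ∀ R : ℝ, 1 < R → Tendsto (fun δ : ℝ =>
        ∫ y in (ball e₁ δ)ᶜ,
          (indicator (ball (0 : EuclideanSpace ℝ (Fin n)) R \ ball 0 1)ᶜ
              (fun _ => (1 : ℝ)) y
            - indicator (ball (0 : EuclideanSpace ℝ (Fin n)) R \ ball 0 1)
              (fun _ => (1 : ℝ)) y) * ‖e₁ - y‖ ^ (-((n : ℝ) + s)))
      (nhdsWithin 0 (Set.Ioi 0)) (nhds (f R)))
    (hH : Tendsto (fun δ : ℝ =>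
        ∫ y in (ball e₁ δ)ᶜ,
          (indicator (ball (0 : EuclideanSpace ℝ (Fin n)) 1)ᶜ (fun _ => (1 : ℝ)) y
            - indicator (ball (0 : EuclideanSpace ℝ (Fin n)) 1) (fun _ => (1 : ℝ)) y) *
            ‖e₁ - y‖ ^ (-((n : ℝ) + s)))
      (nhdsWithin 0 (Set.Ioi 0)) (nhds H)) :
    Tendsto f atTop (nhds (-H)) ∧ 0 < H := by
  have hp : (n : ℝ) < (n : ℝ) + s := lt_add_of_pos_right _ hs
  set p : ℝ := (n : ℝ) + s with hp_def
  set K : EuclideanSpace ℝ (Fin n) → ℝ := fun y => ‖e₁ - y‖ ^ (-p) with hK_def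
  have hKnn : ∀ y, 0 ≤ K y := fun y => Real.rpow_nonneg (norm_nonneg _) _
  have hKm : Measurable K := by fun_prop
  have he₁n : ‖e₁‖ = 1 := by rw [he₁, EuclideanSpace.norm_single]; norm_num
  have hIK : ∀ {δ : ℝ}, 0 < δ → IntegrableOn K (ball e₁ δ)ᶜ :=
    fun {δ} hδ => aux_integrableOn_K hp e₁ hδ
  -- integrability of anything dominated by K
  have hIbound : ∀ {δ : ℝ}, 0 < δ → ∀ g : EuclideanSpace ℝ (Fin n) → ℝ, Measurable g → (∀ y, |g y| ≤ K y) →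
      IntegrableOn g (ball e₁ δ)ᶜ := by
    intro δ hδ g hgm hg
    refine Integrable.mono' (hIK hδ) hgm.aestronglyMeasurable ?_
    filter_upwards with y
    simpa [Real.norm_eq_abs] using hg y
  -- the H-integrand
  set IH : EuclideanSpace ℝ (Fin n) → ℝ := fun y =>
    (indicator (ball (0 : EuclideanSpace ℝ (Fin n)) 1)ᶜ (fun _ => (1 : ℝ)) y
      - indicator (ball (0 : EuclideanSpace ℝ (Fin n)) 1) (fun _ => (1 : ℝ)) y) * K y with hIH_def
  have hIHm : Measurable IH := by
    apply Measurable.mul _ hKm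
    exact (measurable_const.indicator measurableSet_ball.compl).sub
      (measurable_const.indicator measurableSet_ball)
  have hIHb : ∀ y, |IH y| ≤ K y := by
    intro y
    rw [hIH_def, abs_mul, abs_of_nonneg (hKnn y)]
    by_cases h : y ∈ ball (0 : EuclideanSpace ℝ (Fin n)) 1 <;>
      simp [indicator_of_mem, indicator_of_notMem, h, hKnn y]
  -- IH as difference of indicators
  have hIHsplit : ∀ y, IH y = indicator (ball (0 : EuclideanSpace ℝ (Fin n)) 1)ᶜ K y - indicator (ball (0 : EuclideanSpace ℝ (Fin n)) 1) K y := by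
    intro y
    by_cases h : y ∈ ball (0 : EuclideanSpace ℝ (Fin n)) 1 <;>
      simp [hIH_def, indicator_of_mem, indicator_of_notMem, h]
  -- G
  set G : ℝ → ℝ := fun R => ∫ y in (ball (0 : EuclideanSpace ℝ (Fin n)) R)ᶜ, K y with hG_def
  -- G tends to 0
  have hGInt : ∀ {R : ℝ}, 2 ≤ R → IntegrableOn K (ball (0 : EuclideanSpace ℝ (Fin n)) R)ᶜ := by
    intro R hR
    refine (hIK one_pos).mono_set ?_
    intro y hy
    simp only [mem_compl_iff, mem_ball, not_lt] at hy ⊢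
    have : dist y 0 ≤ dist y e₁ + ‖e₁‖ := by
      simpa [dist_eq_norm] using dist_triangle y e₁ 0
    rw [he₁n] at this
    linarith
  have hG0 : Tendsto G atTop (nhds 0) := by
    have h := tendsto_setIntegral_of_antitone (f := K) (μ := volume)
      (s := fun R : ℝ => (ball (0 : EuclideanSpace ℝ (Fin n)) R)ᶜ)
      (fun R => measurableSet_ball.compl)
      (fun R R' h => compl_subset_compl.2 (ball_subset_ball h))
      ⟨2, hGInt le_rfl⟩
    have hiInter : (⋂ R : ℝ, (ball (0 : EuclideanSpace ℝ (Fin n)) R)ᶜ) = ∅ := by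
      ext y
      simp only [mem_iInter, mem_compl_iff, mem_ball, not_lt, mem_empty_iff_false, iff_false,
        not_forall, not_le]
      exact ⟨dist y 0 + 1, by linarith⟩
    rwa [hiInter, setIntegral_empty] at h
  -- convert hH to IH form
  have hH' : Tendsto (fun δ : ℝ => ∫ y in (ball e₁ δ)ᶜ, IH y)
      (nhdsWithin 0 (Set.Ioi 0)) (nhds H) := by
    simpa only [hIH_def, hK_def] using hH
  have hindb : ∀ S : Set (EuclideanSpace ℝ (Fin n)), ∀ y, |S.indicator K y| ≤ K y := by
    intro S y
    by_cases h : y ∈ S <;> simp [h, hKnn y, abs_of_nonneg (hKnn y)]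
  -- key identity
  have hkey : ∀ R : ℝ, 1 < R → f R = -H + 2 * G R := by
    intro R hR
    have hδmem : Ioc (0 : ℝ) (min 1 (R - 1)) ∈ nhdsWithin (0 : ℝ) (Set.Ioi 0) :=
      Ioc_mem_nhdsGT_of_mem ⟨le_rfl, lt_min one_pos (by linarith)⟩
    have heq : ∀ᶠ δ in nhdsWithin (0 : ℝ) (Set.Ioi 0),
        (∫ y in (ball e₁ δ)ᶜ,
          (indicator (ball (0 : EuclideanSpace ℝ (Fin n)) R \ ball 0 1)ᶜ
              (fun _ => (1 : ℝ)) y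
            - indicator (ball (0 : EuclideanSpace ℝ (Fin n)) R \ ball 0 1)
              (fun _ => (1 : ℝ)) y) * ‖e₁ - y‖ ^ (-p))
        = -(∫ y in (ball e₁ δ)ᶜ, IH y) + 2 * G R := by
      filter_upwards [hδmem] with δ hδ
      obtain ⟨hδ0, hδle⟩ := hδ
      have hpt : ∀ y : EuclideanSpace ℝ (Fin n),
          (indicator (ball (0 : EuclideanSpace ℝ (Fin n)) R \ ball 0 1)ᶜ
              (fun _ => (1 : ℝ)) y
            - indicator (ball (0 : EuclideanSpace ℝ (Fin n)) R \ ball 0 1)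
              (fun _ => (1 : ℝ)) y) * ‖e₁ - y‖ ^ (-p)
          = -(IH y) + 2 * (indicator (ball (0 : EuclideanSpace ℝ (Fin n)) R)ᶜ K y) := by
        intro y
        by_cases h1 : y ∈ ball (0 : EuclideanSpace ℝ (Fin n)) 1 <;>
          by_cases h2 : y ∈ ball (0 : EuclideanSpace ℝ (Fin n)) R
        · simp only [hIH_def, hK_def, Set.indicator_apply, mem_diff, mem_compl_iff, h1, h2,
            not_true, not_false_iff, and_true, and_false, true_and, false_and, if_true, if_false,
            if_neg, if_pos]
          simp [h1, h2]
          try ring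
        · exact absurd (ball_subset_ball hR.le h1) h2
        · simp only [hIH_def, hK_def, Set.indicator_apply, mem_diff, mem_compl_iff]
          simp [h1, h2]
          try ring
        · simp only [hIH_def, hK_def, Set.indicator_apply, mem_diff, mem_compl_iff]
          simp [h1, h2]
          try ring
      have hint1 : IntegrableOn IH (ball e₁ δ)ᶜ := hIbound hδ0 IH hIHm hIHb
      have hint2 : IntegrableOn (indicator (ball (0 : EuclideanSpace ℝ (Fin n)) R)ᶜ K)
          (ball e₁ δ)ᶜ :=
        hIbound hδ0 _ (hKm.indicator measurableSet_ball.compl) (hindb _)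
      have hint1' : IntegrableOn (fun y => -(IH y)) (ball e₁ δ)ᶜ (volume) := hint1.neg
      have hint2' : IntegrableOn
          (fun y => 2 * indicator (ball (0 : EuclideanSpace ℝ (Fin n)) R)ᶜ K y)
          (ball e₁ δ)ᶜ (volume) := hint2.const_mul 2
      have hAR : (ball e₁ δ)ᶜ ∩ (ball (0 : EuclideanSpace ℝ (Fin n)) R)ᶜ
          = (ball (0 : EuclideanSpace ℝ (Fin n)) R)ᶜ := by
        refine inter_eq_right.2 fun y hy => ?_
        simp only [mem_compl_iff, mem_ball, not_lt] at hy ⊢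
        have h3 : dist y 0 ≤ dist y e₁ + dist e₁ 0 := dist_triangle y e₁ 0
        have h4 : dist e₁ 0 = 1 := by simpa [dist_eq_norm] using he₁n
        have h5 : δ ≤ R - 1 := hδle.trans (min_le_right _ _)
        linarith
      calc (∫ y in (ball e₁ δ)ᶜ,
          (indicator (ball (0 : EuclideanSpace ℝ (Fin n)) R \ ball 0 1)ᶜ
              (fun _ => (1 : ℝ)) y
            - indicator (ball (0 : EuclideanSpace ℝ (Fin n)) R \ ball 0 1)
              (fun _ => (1 : ℝ)) y) * ‖e₁ - y‖ ^ (-p))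
          = ∫ y in (ball e₁ δ)ᶜ,
            (-(IH y) + 2 * (indicator (ball (0 : EuclideanSpace ℝ (Fin n)) R)ᶜ K y)) := by
            simp only [hpt]
        _ = -(∫ y in (ball e₁ δ)ᶜ, IH y)
            + 2 * ∫ y in (ball e₁ δ)ᶜ, indicator (ball (0 : EuclideanSpace ℝ (Fin n)) R)ᶜ K y := by
            rw [integral_add hint1' hint2', integral_neg, integral_const_mul]
        _ = -(∫ y in (ball e₁ δ)ᶜ, IH y) + 2 * G R := by
            rw [setIntegral_indicator measurableSet_ball.compl, hAR]
    have tend2 : Tendsto (fun δ : ℝ =>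
        ∫ y in (ball e₁ δ)ᶜ,
          (indicator (ball (0 : EuclideanSpace ℝ (Fin n)) R \ ball 0 1)ᶜ
              (fun _ => (1 : ℝ)) y
            - indicator (ball (0 : EuclideanSpace ℝ (Fin n)) R \ ball 0 1)
              (fun _ => (1 : ℝ)) y) * ‖e₁ - y‖ ^ (-p))
        (nhdsWithin 0 (Set.Ioi 0)) (nhds (-H + 2 * G R)) := by
      refine Tendsto.congr' (EventuallyEq.symm heq) ?_
      exact (hH'.neg).add_const (2 * G R)
    exact tendsto_nhds_unique (hf R hR) tend2
  constructor
  · have h1 : Tendsto (fun R => -H + 2 * G R) atTop (nhds (-H)) := by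
      have := (hG0.const_mul (2 : ℝ)).const_add (-H)
      simpa using this
    refine Tendsto.congr' ?_ h1
    filter_upwards [eventually_gt_atTop (1 : ℝ)] with R hR
    exact (hkey R hR).symm
  · -- positivity of H
    have hbn : ‖-(e₁ + e₁)‖ = 2 := by
      rw [norm_neg, show e₁ + e₁ = (2 : ℝ) • e₁ by module, norm_smul, he₁n]
      norm_num
    have hcn : ‖e₁ + e₁‖ = 2 := by
      rw [show e₁ + e₁ = (2 : ℝ) • e₁ by module, norm_smul, he₁n]
      norm_num
    have hbe : dist (-(e₁ + e₁)) e₁ = 3 := by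
      rw [dist_eq_norm, show -(e₁ + e₁) - e₁ = -((3 : ℝ) • e₁) by module, norm_neg, norm_smul,
        he₁n]
      norm_num
    have hbc : dist (-(e₁ + e₁)) (e₁ + e₁) = 4 := by
      rw [dist_eq_norm, show -(e₁ + e₁) - (e₁ + e₁) = -((4 : ℝ) • e₁) by module, norm_neg,
        norm_smul, he₁n]
      norm_num
    -- small balls
    have hball_b_1 : ball (-(e₁ + e₁)) 1 ⊆ (ball (0 : EuclideanSpace ℝ (Fin n)) 1)ᶜ := by
      intro y hy
      simp only [mem_ball, mem_compl_iff, not_lt] at hy ⊢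
      have := dist_triangle (-(e₁ + e₁)) y 0
      rw [dist_comm (-(e₁+e₁)) y] at this
      simp only [dist_zero_right] at this
      simp only [dist_zero_right] at this ⊢
      rw [hbn] at this
      linarith
    have hball_c_1 : ball (e₁ + e₁) 1 ⊆ (ball (0 : EuclideanSpace ℝ (Fin n)) 1)ᶜ := by
      intro y hy
      simp only [mem_ball, mem_compl_iff, not_lt] at hy ⊢
      have := dist_triangle (e₁ + e₁) y 0
      rw [dist_comm (e₁+e₁) y] at this
      simp only [dist_zero_right] at this
      simp only [dist_zero_right] at this ⊢
      rw [hcn] at this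
      linarith
    have hball_b_e : ∀ {δ : ℝ}, δ ≤ 1 → ball (-(e₁ + e₁)) 1 ⊆ (ball e₁ δ)ᶜ := by
      intro δ hδ y hy
      simp only [mem_ball, mem_compl_iff, not_lt] at hy ⊢
      have := dist_triangle (-(e₁ + e₁)) y e₁
      rw [dist_comm (-(e₁+e₁)) y, hbe] at this
      linarith
    have hdisj : Disjoint (ball (e₁ + e₁) 1) (ball (-(e₁ + e₁)) 1) := by
      apply ball_disjoint_ball
      rw [dist_comm, hbc]
      norm_num
    have hIbb : IntegrableOn K (ball (-(e₁ + e₁)) 1) := by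
      refine (hIK one_pos).mono_set fun y hy => ?_
      have := hball_b_e le_rfl hy
      exact this
    set c₀ : ℝ := ∫ y in ball (-(e₁ + e₁)) 1, K y with hc₀_def
    have hc₀ : 0 < c₀ := by
      rw [hc₀_def]
      refine (setIntegral_pos_iff_support_of_nonneg_ae (ae_of_all _ hKnn) hIbb).2 ?_
      have hsub : ball (-(e₁ + e₁)) 1 ⊆ Function.support K ∩ ball (-(e₁ + e₁)) 1 := by
        intro y hy
        refine ⟨?_, hy⟩
        have hne : y ≠ e₁ := by
          intro h
          rw [h] at hy
          simp only [mem_ball] at hy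
          rw [dist_comm, hbe] at hy
          norm_num at hy
        have : 0 < ‖e₁ - y‖ := by
          rw [norm_pos_iff, sub_ne_zero]
          exact fun h => hne h.symm
        exact ne_of_gt (Real.rpow_pos_of_pos this _)
      calc (0 : ENNReal) < volume (ball (-(e₁ + e₁)) 1) := measure_ball_pos _ _ one_pos
        _ ≤ volume (Function.support K ∩ ball (-(e₁ + e₁)) 1) := measure_mono hsub
    -- lower bound for the truncated integrals
    have hlow : ∀ᶠ δ in nhdsWithin (0 : ℝ) (Set.Ioi 0),
        c₀ ≤ ∫ y in (ball e₁ δ)ᶜ, IH y := by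
      filter_upwards [Ioc_mem_nhdsGT_of_mem
        (show (0:ℝ) ∈ Ico (0:ℝ) 1 from ⟨le_rfl, one_pos⟩)] with δ hδ
      obtain ⟨hδ0, hδ1⟩ := hδ
      have hint1 : IntegrableOn (indicator (ball (0 : EuclideanSpace ℝ (Fin n)) 1)ᶜ K)
          (ball e₁ δ)ᶜ := hIbound hδ0 _ (hKm.indicator measurableSet_ball.compl) (hindb _)
      have hint2 : IntegrableOn (indicator (ball (0 : EuclideanSpace ℝ (Fin n)) 1) K)
          (ball e₁ δ)ᶜ := hIbound hδ0 _ (hKm.indicator measurableSet_ball) (hindb _)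
      have hsplit : (∫ y in (ball e₁ δ)ᶜ, IH y)
          = (∫ y in (ball e₁ δ)ᶜ ∩ (ball (0 : EuclideanSpace ℝ (Fin n)) 1)ᶜ, K y)
            - ∫ y in (ball e₁ δ)ᶜ ∩ ball (0 : EuclideanSpace ℝ (Fin n)) 1, K y := by
        calc (∫ y in (ball e₁ δ)ᶜ, IH y)
            = ∫ y in (ball e₁ δ)ᶜ,
              (indicator (ball (0 : EuclideanSpace ℝ (Fin n)) 1)ᶜ K y
                - indicator (ball (0 : EuclideanSpace ℝ (Fin n)) 1) K y) := by
              simp only [hIHsplit]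
          _ = (∫ y in (ball e₁ δ)ᶜ, indicator (ball (0 : EuclideanSpace ℝ (Fin n)) 1)ᶜ K y)
              - ∫ y in (ball e₁ δ)ᶜ, indicator (ball (0 : EuclideanSpace ℝ (Fin n)) 1) K y :=
              integral_sub hint1 hint2
          _ = _ := by
              rw [setIntegral_indicator measurableSet_ball.compl,
                setIntegral_indicator measurableSet_ball]
      -- change of variables in the inner integral
      have hmp : MeasurePreserving (fun x : EuclideanSpace ℝ (Fin n) => (e₁ + e₁) - x)
          volume volume := Measure.measurePreserving_sub_left volume (e₁ + e₁)
      have hemb : MeasurableEmbedding (fun x : EuclideanSpace ℝ (Fin n) => (e₁ + e₁) - x) :=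
        (Homeomorph.subLeft (e₁ + e₁)).measurableEmbedding
      have hchange := hmp.setIntegral_preimage_emb hemb K
        ((ball e₁ δ)ᶜ ∩ ball (0 : EuclideanSpace ℝ (Fin n)) 1)
      have hKT : ∀ x : EuclideanSpace ℝ (Fin n), K ((e₁ + e₁) - x) = K x := by
        intro x
        rw [hK_def]
        simp only
        rw [show e₁ - ((e₁ + e₁) - x) = -(e₁ - x) by module, norm_neg]
      have hpre : (fun x : EuclideanSpace ℝ (Fin n) => (e₁ + e₁) - x) ⁻¹'
            ((ball e₁ δ)ᶜ ∩ ball (0 : EuclideanSpace ℝ (Fin n)) 1)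
          = (ball e₁ δ)ᶜ ∩ ball (e₁ + e₁) 1 := by
        ext z
        simp only [mem_preimage, mem_inter_iff, mem_compl_iff, mem_ball, dist_eq_norm, sub_zero]
        rw [show (e₁ + e₁) - z - e₁ = -(z - e₁) by module, norm_neg,
          show (e₁ + e₁) - z = -(z - (e₁ + e₁)) by module, norm_neg]
      rw [hpre] at hchange
      simp only [hKT] at hchange
      -- hchange : ∫ in (ball e₁ δ)ᶜ ∩ ball (e₁+e₁) 1, K = ∫ in (ball e₁ δ)ᶜ ∩ ball 0 1, K
      have hunion_sub : ((ball e₁ δ)ᶜ ∩ ball (e₁ + e₁) 1) ∪ ball (-(e₁ + e₁)) 1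
          ⊆ (ball e₁ δ)ᶜ ∩ (ball (0 : EuclideanSpace ℝ (Fin n)) 1)ᶜ := by
        rintro y (⟨hy1, hy2⟩ | hy)
        · exact ⟨hy1, hball_c_1 hy2⟩
        · exact ⟨hball_b_e hδ1 hy, hball_b_1 hy⟩
      have hIcap : IntegrableOn K ((ball e₁ δ)ᶜ ∩ ball (e₁ + e₁) 1) :=
        (hIK hδ0).mono_set inter_subset_left
      have hIbig : IntegrableOn K ((ball e₁ δ)ᶜ ∩ (ball (0 : EuclideanSpace ℝ (Fin n)) 1)ᶜ) :=
        (hIK hδ0).mono_set inter_subset_left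
      have hudisj : Disjoint ((ball e₁ δ)ᶜ ∩ ball (e₁ + e₁) 1) (ball (-(e₁ + e₁)) 1) :=
        hdisj.mono_left inter_subset_right
      have hunion_eq : (∫ y in ((ball e₁ δ)ᶜ ∩ ball (e₁ + e₁) 1) ∪ ball (-(e₁ + e₁)) 1, K y)
          = (∫ y in (ball e₁ δ)ᶜ ∩ ball (e₁ + e₁) 1, K y) + c₀ := by
        rw [hc₀_def]
        exact setIntegral_union hudisj measurableSet_ball hIcap hIbb
      have hmono : (∫ y in ((ball e₁ δ)ᶜ ∩ ball (e₁ + e₁) 1) ∪ ball (-(e₁ + e₁)) 1, K y)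
          ≤ ∫ y in (ball e₁ δ)ᶜ ∩ (ball (0 : EuclideanSpace ℝ (Fin n)) 1)ᶜ, K y :=
        setIntegral_mono_set hIbig (ae_of_all _ hKnn)
          (HasSubset.Subset.eventuallyLE hunion_sub)
      rw [hsplit, ← hchange]
      linarith [hunion_eq, hmono]
    have : c₀ ≤ H := ge_of_tendsto hH' hlow
    linarith
end

section
/- Let s ∈ (0,1), let Ω ⊂ ℝ^n be open and bounded, and let E ⊂ ℝ^n be measurable. Suppose there is a sequence of points x_k with |x_k| → ∞ satisfying ∫_Ω (χ_{E^c}(y) − χ_E(y)) |x_k − y|^{-(n+s)} dy = 0 for every k. Then the Lebesgue measures satisfy |E ∩ Ω| = |E^c ∩ Ω|. -/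
open Metric MeasureTheory Set Filter

/-- The volume condition: if the free boundary condition holds at a sequence of points going
to infinity, then `E` and `E^c` have the same volume inside the bounded domain `Ω`. -/
theorem volume_condition (n : ℕ) (s : ℝ) (hs : 0 < s) (hs1 : s < 1)
    (Ω E : Set (EuclideanSpace ℝ (Fin n))) (hΩo : IsOpen Ω)
    (hΩb : Bornology.IsBounded Ω) (hE : MeasurableSet E)
    (x : ℕ → EuclideanSpace ℝ (Fin n))
    (hx : Tendsto (fun k => ‖x k‖) atTop atTop)
    (hzero : ∀ k, ∫ y in Ω,
        (indicator Eᶜ (fun _ => (1 : ℝ)) y - indicator E (fun _ => (1 : ℝ)) y) *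
          ‖x k - y‖ ^ (-((n : ℝ) + s)) = 0) :
    volume (E ∩ Ω) = volume (Eᶜ ∩ Ω) := by
  set c : ℝ := (n : ℝ) + s with hc_def
  have hc : 0 < c := by positivity
  set g : EuclideanSpace ℝ (Fin n) → ℝ :=
    fun y => indicator Eᶜ (fun _ => (1 : ℝ)) y - indicator E (fun _ => (1 : ℝ)) y with hg_def
  have hgmeas : Measurable g :=
    (measurable_const.indicator hE.compl).sub (measurable_const.indicator hE)
  have hgbdd : ∀ y, |g y| ≤ 1 := by
    intro y
    by_cases hy : y ∈ E <;> simp [hg_def, indicator, hy]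
  -- bound on Ω
  obtain ⟨R, hR0, hΩR⟩ : ∃ R, 0 ≤ R ∧ ∀ y ∈ Ω, ‖y‖ ≤ R := by
    obtain ⟨R, hR⟩ := hΩb.subset_closedBall 0
    refine ⟨max R 0, le_max_right _ _, fun y hy => ?_⟩
    have := hR hy
    simp only [Metric.mem_closedBall, dist_zero_right] at this
    exact this.trans (le_max_left _ _)
  obtain ⟨N, hN⟩ : ∃ N, ∀ k ≥ N, 2 * R + 1 ≤ ‖x k‖ :=
    eventually_atTop.mp (hx.eventually_ge_atTop (2 * R + 1))
  set X : ℕ → EuclideanSpace ℝ (Fin n) := fun k => x (k + N) with hX_def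
  have hXnorm : ∀ k, 2 * R + 1 ≤ ‖X k‖ := fun k => hN _ (Nat.le_add_left N k)
  have hXpos : ∀ k, 0 < ‖X k‖ := fun k => lt_of_lt_of_le (by linarith) (hXnorm k)
  have hXy : ∀ k, ∀ y ∈ Ω, R + 1 ≤ ‖X k - y‖ := by
    intro k y hy
    have h1 : ‖X k‖ - ‖y‖ ≤ ‖X k - y‖ := norm_sub_norm_le _ _
    have h2 := hΩR y hy
    have := hXnorm k
    linarith
  have hXypos : ∀ k, ∀ y ∈ Ω, 0 < ‖X k - y‖ := fun k y hy =>
    lt_of_lt_of_le (by linarith) (hXy k y hy)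
  have hXtend : Tendsto (fun k => ‖X k‖) atTop atTop :=
    hx.comp (tendsto_add_atTop_nat N)
  -- finite measure on Ω
  have hΩvol : volume Ω < ⊤ := hΩb.measure_lt_top
  have hfin : IsFiniteMeasure (volume.restrict Ω) :=
    ⟨by rwa [Measure.restrict_apply_univ]⟩
  -- the sequence of functions
  set F : ℕ → EuclideanSpace ℝ (Fin n) → ℝ :=
    fun k y => g y * ‖X k - y‖ ^ (-c) * ‖X k‖ ^ c with hF_def
  have hFmeas : ∀ k, AEStronglyMeasurable (F k) (volume.restrict Ω) := by
    intro k
    have h1 : ContinuousOn (fun y : EuclideanSpace ℝ (Fin n) => ‖X k - y‖ ^ (-c)) Ω := by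
      apply ContinuousOn.rpow_const
      · exact ((continuous_const.sub continuous_id).norm).continuousOn
      · intro y hy
        exact Or.inl (ne_of_gt (hXypos k y hy))
    exact ((hgmeas.aestronglyMeasurable.mul
      (h1.aestronglyMeasurable hΩo.measurableSet)).mul aestronglyMeasurable_const)
  have hFbound : ∀ k, ∀ᵐ y ∂(volume.restrict Ω), ‖F k y‖ ≤ 2 ^ c := by
    intro k
    filter_upwards [ae_restrict_mem hΩo.measurableSet] with y hy
    have hb : 0 < ‖X k - y‖ := hXypos k y hy
    have key : ‖X k‖ ^ c ≤ 2 ^ c * ‖X k - y‖ ^ c := by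
      rw [← Real.mul_rpow (by norm_num) (norm_nonneg _)]
      apply Real.rpow_le_rpow (norm_nonneg _) _ hc.le
      have h1 : ‖X k‖ - ‖y‖ ≤ ‖X k - y‖ := norm_sub_norm_le _ _
      have h2 := hΩR y hy
      have := hXnorm k
      linarith
    have hpow : ‖X k - y‖ ^ (-c) * ‖X k‖ ^ c ≤ 2 ^ c := by
      rw [Real.rpow_neg (norm_nonneg _)]
      rw [inv_mul_le_iff₀ (Real.rpow_pos_of_pos hb c)]
      linarith [key]
    have hpos : (0:ℝ) ≤ ‖X k - y‖ ^ (-c) * ‖X k‖ ^ c :=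
      mul_nonneg (Real.rpow_nonneg (norm_nonneg _) _) (Real.rpow_nonneg (norm_nonneg _) _)
    calc ‖F k y‖ = |g y| * (‖X k - y‖ ^ (-c) * ‖X k‖ ^ c) := by
          rw [hF_def]; simp only [Real.norm_eq_abs, abs_mul, mul_assoc]
          rw [abs_of_nonneg (Real.rpow_nonneg (norm_nonneg _) _),
            abs_of_nonneg (Real.rpow_nonneg (norm_nonneg _) _)]
      _ ≤ 1 * (‖X k - y‖ ^ (-c) * ‖X k‖ ^ c) := by
          apply mul_le_mul_of_nonneg_right (hgbdd y) hpos
      _ = ‖X k - y‖ ^ (-c) * ‖X k‖ ^ c := one_mul _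
      _ ≤ 2 ^ c := hpow
  have hFlim : ∀ᵐ y ∂(volume.restrict Ω), Tendsto (fun k => F k y) atTop (nhds (g y)) := by
    filter_upwards [ae_restrict_mem hΩo.measurableSet] with y hy
    have hratio : Tendsto (fun k => ‖X k - y‖ / ‖X k‖) atTop (nhds 1) := by
      rw [← tendsto_sub_nhds_zero_iff]
      apply squeeze_zero_norm (a := fun k => ‖y‖ / ‖X k‖)
      · intro k
        have hpos := hXpos k
        have heq : ‖X k - y‖ / ‖X k‖ - 1 = (‖X k - y‖ - ‖X k‖) / ‖X k‖ := by
          field_simp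
        rw [Real.norm_eq_abs, heq, abs_div, abs_of_pos hpos]
        gcongr
        have h := abs_norm_sub_norm_le (X k - y) (X k)
        simpa using h
      · exact tendsto_const_nhds.div_atTop hXtend
    have hinv : Tendsto (fun k => (‖X k - y‖ / ‖X k‖)⁻¹) atTop (nhds 1) := by
      simpa using hratio.inv₀ one_ne_zero
    have hpow : Tendsto (fun k => ((‖X k - y‖ / ‖X k‖)⁻¹) ^ c) atTop (nhds 1) := by
      simpa [Real.one_rpow] using hinv.rpow_const (Or.inr hc.le)
    have heq : ∀ k, ((‖X k - y‖ / ‖X k‖)⁻¹) ^ c = ‖X k - y‖ ^ (-c) * ‖X k‖ ^ c := by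
      intro k
      rw [inv_div, Real.div_rpow (norm_nonneg _) (norm_nonneg _),
        Real.rpow_neg (norm_nonneg _), div_eq_mul_inv, mul_comm]
    have hpow' : Tendsto (fun k => ‖X k - y‖ ^ (-c) * ‖X k‖ ^ c) atTop (nhds 1) := by
      simpa only [heq] using hpow
    have := hpow'.const_mul (g y)
    simp only [mul_one] at this
    simpa only [hF_def, mul_assoc] using this
  -- apply dominated convergence
  have hDCT := tendsto_integral_of_dominated_convergence (μ := volume.restrict Ω)
    (F := F) (f := g) (fun _ => 2 ^ c) hFmeas (integrable_const _) hFbound hFlim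
  have hzeroF : ∀ k, (∫ y in Ω, F k y) = 0 := by
    intro k
    have h := hzero (k + N)
    have : (∫ y in Ω, F k y) = (∫ y in Ω, g y * ‖X k - y‖ ^ (-c)) * ‖X k‖ ^ c := by
      rw [← integral_mul_const]
    rw [this, h, zero_mul]
  have hint0 : (∫ y in Ω, g y) = 0 := by
    have : Tendsto (fun k => ∫ y in Ω, F k y) atTop (nhds 0) := by
      have h0 : (fun k => ∫ y in Ω, F k y) = fun _ => (0 : ℝ) := funext hzeroF
      rw [h0]
      exact tendsto_const_nhds
    exact (tendsto_nhds_unique hDCT this)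
  -- translate the vanishing integral into the measure identity
  have hi1 : Integrable (indicator Eᶜ (fun _ => (1 : ℝ))) (volume.restrict Ω) :=
    (integrable_const 1).indicator hE.compl
  have hi2 : Integrable (indicator E (fun _ => (1 : ℝ))) (volume.restrict Ω) :=
    (integrable_const 1).indicator hE
  have hsplit : (∫ y in Ω, g y) =
      (∫ y in Ω, indicator Eᶜ (fun _ => (1 : ℝ)) y) -
        (∫ y in Ω, indicator E (fun _ => (1 : ℝ)) y) := integral_sub hi1 hi2
  have hder1 : (∫ y in Ω, indicator Eᶜ (fun _ => (1 : ℝ)) y) = (volume (Eᶜ ∩ Ω)).toReal := by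
    rw [setIntegral_indicator hE.compl, setIntegral_const, smul_eq_mul, mul_one,
      inter_comm]; rfl
  have hder2 : (∫ y in Ω, indicator E (fun _ => (1 : ℝ)) y) = (volume (E ∩ Ω)).toReal := by
    rw [setIntegral_indicator hE, setIntegral_const, smul_eq_mul, mul_one, inter_comm]; rfl
  have h1 : volume (E ∩ Ω) ≠ ⊤ :=
    (lt_of_le_of_lt (measure_mono inter_subset_right) hΩvol).ne
  have h2 : volume (Eᶜ ∩ Ω) ≠ ⊤ :=
    (lt_of_le_of_lt (measure_mono inter_subset_right) hΩvol).ne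
  rw [← ENNReal.toReal_eq_toReal_iff' h1 h2]
  rw [hsplit, hder1, hder2] at hint0
  linarith
end

section
/- Let s ∈ (0,1), let Ω ⊂ ℝ^n be open, and fix ρ > 0 with Ω ∩ B_ρ ⊂ E for a measurable set E ⊂ ℝ^n. Suppose 0 ∈ ∂Ω, and that there is a sequence x_k → 0 with x_k ∈ ℝ^n \ closure(Ω) satisfying ∫_Ω (χ_{E^c}(y) − χ_E(y)) |x_k − y|^{-(n+s)} dy = 0 for all k. Then ∫_{Ω ∩ B_ρ} |y|^{-(n+s)} dy < ∞. -/
open Metric MeasureTheory Set Filter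

/-- Key step for excluding stickiness from outside: if `Ω ∩ B_ρ ⊆ E`, `0 ∈ ∂Ω`, and the free
boundary condition holds at a sequence of exterior points `x_k → 0`, then the kernel
`|y|^{-(n+s)}` is integrable on `Ω ∩ B_ρ`. -/
theorem no_outside_stickiness_key (n : ℕ) (hn : 1 ≤ n) (s ρ : ℝ)
    (hs : 0 < s) (hs1 : s < 1) (hρ : 0 < ρ)
    (Ω E : Set (EuclideanSpace ℝ (Fin n))) (hΩ : IsOpen Ω)
    (hsub : Ω ∩ ball 0 ρ ⊆ E) (hE : MeasurableSet E)
    (h0 : (0 : EuclideanSpace ℝ (Fin n)) ∈ frontier Ω)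
    (x : ℕ → EuclideanSpace ℝ (Fin n)) (hxt : Tendsto x atTop (nhds 0))
    (hxo : ∀ k, x k ∈ (closure Ω)ᶜ)
    (hzero : ∀ k, ∫ y in Ω,
        (indicator Eᶜ (fun _ => (1 : ℝ)) y - indicator E (fun _ => (1 : ℝ)) y) *
          ‖x k - y‖ ^ (-((n : ℝ) + s)) = 0) :
    ∫⁻ y in Ω ∩ ball 0 ρ, ENNReal.ofReal (‖y‖ ^ (-((n : ℝ) + s))) < ⊤ := by
  classical
  set r : ℝ := (n : ℝ) + s with hrdef
  have hr0 : 0 < r := by positivity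
  haveI : Nontrivial (EuclideanSpace ℝ (Fin n)) := Module.nontrivial_of_finrank_pos (R := ℝ)
    (by rw [finrank_euclideanSpace_fin]; omega)
  set A : Set (EuclideanSpace ℝ (Fin n)) := Ω ∩ ball 0 ρ with hAdef
  set B : Set (EuclideanSpace ℝ (Fin n)) := Ω \ ball 0 ρ with hBdef
  have hAmeas : MeasurableSet A := hΩ.measurableSet.inter measurableSet_ball
  have hBmeas : MeasurableSet B := hΩ.measurableSet.diff measurableSet_ball
  have hAB : A ∪ B = Ω := inter_union_diff Ω (ball 0 ρ)
  have hAfin : volume A < ⊤ :=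
    lt_of_le_of_lt (measure_mono inter_subset_right) measure_ball_lt_top
  have hBsub : B ⊆ (ball (0 : (EuclideanSpace ℝ (Fin n))) ρ)ᶜ := fun y hy => hy.2
  -- measurability of kernels
  have hKm : ∀ z : (EuclideanSpace ℝ (Fin n)), Measurable (fun y : (EuclideanSpace ℝ (Fin n)) => ‖z - y‖ ^ (-r)) := by
    intro z; fun_prop
  -- integrability of the tail kernel `‖y‖ ^ (-r)` outside the ball
  have hG : IntegrableOn (fun y : (EuclideanSpace ℝ (Fin n)) => ‖y‖ ^ (-r)) (ball (0 : (EuclideanSpace ℝ (Fin n))) ρ)ᶜ := by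
    have hnr : (Module.finrank ℝ (EuclideanSpace ℝ (Fin n)) : ℝ) < r := by
      rw [finrank_euclideanSpace_fin]; rw [hrdef]; linarith
    have hint : Integrable (fun y : (EuclideanSpace ℝ (Fin n)) => (1 + 1 / ρ) ^ r * (1 + ‖y‖) ^ (-r)) :=
      (integrable_one_add_norm hnr).const_mul _
    refine Integrable.mono' hint.integrableOn
      ((hKm 0).comp measurable_id |>.aestronglyMeasurable.congr ?_) ?_
    · filter_upwards with y
      simp [zero_sub, norm_neg]
    · rw [ae_restrict_iff' measurableSet_ball.compl]
      filter_upwards with y hy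
      have hy' : ρ ≤ ‖y‖ := by
        simpa [mem_ball, dist_zero_right, not_lt] using hy
      have hy0 : 0 < ‖y‖ := lt_of_lt_of_le hρ hy'
      have hc : 1 + ‖y‖ ≤ (1 + 1 / ρ) * ‖y‖ := by
        have h1 : (1 : ℝ) / ρ * ρ = 1 := by field_simp
        have h2 : (1 : ℝ) / ρ * ρ ≤ 1 / ρ * ‖y‖ :=
          mul_le_mul_of_nonneg_left hy' (by positivity)
        nlinarith
      have hq : ((1 + ‖y‖) / (1 + 1 / ρ)) ≤ ‖y‖ := by
        rw [div_le_iff₀ (by positivity)]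
        linarith [hc]
      have hqpos : 0 < (1 + ‖y‖) / (1 + 1 / ρ) := by positivity
      have hb : ‖y‖ ^ (-r) ≤ ((1 + ‖y‖) / (1 + 1 / ρ)) ^ (-r) :=
        Real.rpow_le_rpow_of_nonpos hqpos hq (by linarith)
      have heq : ((1 + ‖y‖) / (1 + 1 / ρ)) ^ (-r)
          = (1 + 1 / ρ) ^ r * (1 + ‖y‖) ^ (-r) := by
        rw [Real.div_rpow (by positivity) (by positivity), Real.rpow_neg (by positivity : (0:ℝ) ≤ 1 + 1/ρ),
          div_eq_mul_inv, inv_inv, mul_comm]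
      rw [Real.norm_eq_abs, abs_of_nonneg (Real.rpow_nonneg (norm_nonneg y) _)]
      rw [heq] at hb
      exact hb
  -- the main uniform estimate at exterior points close to 0
  set Creal : ℝ := ∫ y in (ball (0 : (EuclideanSpace ℝ (Fin n))) ρ)ᶜ, 2 ^ r * ‖y‖ ^ (-r) with hCdef
  have hmain : ∀ k, ‖x k‖ ≤ ρ / 2 →
      (∫⁻ y in A, ENNReal.ofReal (‖x k - y‖ ^ (-r))) ≤ ENNReal.ofReal Creal := by
    intro k hk
    -- a positive lower bound for distances from `x k` to `Ω`
    obtain ⟨ε, hε, hball⟩ :=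
      Metric.isOpen_iff.mp (isOpen_compl_iff.mpr isClosed_closure) (x k) (hxo k)
    have hdist : ∀ y ∈ Ω, ε ≤ ‖x k - y‖ := by
      intro y hy
      by_contra hlt
      push_neg at hlt
      have : y ∈ ball (x k) ε := by
        rwa [mem_ball', dist_eq_norm]
      exact hball this (subset_closure hy)
    -- kernel bound on A
    have hKA : ∀ y ∈ A, ‖x k - y‖ ^ (-r) ≤ ε ^ (-r) := fun y hy =>
      Real.rpow_le_rpow_of_nonpos hε (hdist y hy.1) (by linarith)
    -- kernel bound on B
    have hKB : ∀ y : (EuclideanSpace ℝ (Fin n)), y ∉ ball (0 : (EuclideanSpace ℝ (Fin n))) ρ → ‖x k - y‖ ^ (-r) ≤ 2 ^ r * ‖y‖ ^ (-r) := by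
      intro y hy
      have hy' : ρ ≤ ‖y‖ := by
        simpa [mem_ball, dist_zero_right, not_lt] using hy
      have hy0 : 0 < ‖y‖ := lt_of_lt_of_le hρ hy'
      have hlow : ‖y‖ / 2 ≤ ‖x k - y‖ := by
        have h1 : ‖y‖ - ‖x k‖ ≤ ‖y - x k‖ := norm_sub_norm_le y (x k)
        rw [norm_sub_rev] at h1
        have : ‖x k‖ ≤ ‖y‖ / 2 := le_trans hk (by linarith)
        linarith
      have hb : ‖x k - y‖ ^ (-r) ≤ (‖y‖ / 2) ^ (-r) :=
        Real.rpow_le_rpow_of_nonpos (by positivity) hlow (by linarith)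
      have heq : (‖y‖ / 2) ^ (-r) = 2 ^ r * ‖y‖ ^ (-r) := by
        rw [Real.div_rpow (norm_nonneg y) (by norm_num), Real.rpow_neg (by norm_num : (0:ℝ) ≤ 2),
          div_eq_mul_inv, inv_inv, mul_comm]
      rw [heq] at hb
      exact hb
    -- integrability of the kernel on A and on B
    have hKAint : IntegrableOn (fun y : (EuclideanSpace ℝ (Fin n)) => ‖x k - y‖ ^ (-r)) A := by
      refine Integrable.mono' (g := fun _ : (EuclideanSpace ℝ (Fin n)) => ε ^ (-r))
        ((integrableOn_const_iff).mpr (Or.inr hAfin)) ((hKm (x k)).aestronglyMeasurable) ?_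
      rw [ae_restrict_iff' hAmeas]
      filter_upwards with y hy
      rw [Real.norm_eq_abs, abs_of_nonneg (Real.rpow_nonneg (norm_nonneg _) _)]
      exact hKA y hy
    have hKBint : IntegrableOn (fun y : (EuclideanSpace ℝ (Fin n)) => ‖x k - y‖ ^ (-r)) B := by
      refine Integrable.mono' (g := fun y : (EuclideanSpace ℝ (Fin n)) => 2 ^ r * ‖y‖ ^ (-r))
        (IntegrableOn.mono_set (hG.const_mul (2 ^ r)) hBsub) ((hKm (x k)).aestronglyMeasurable) ?_
      rw [ae_restrict_iff' hBmeas]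
      filter_upwards with y hy
      rw [Real.norm_eq_abs, abs_of_nonneg (Real.rpow_nonneg (norm_nonneg _) _)]
      exact hKB y hy.2
    -- the integrand of the free boundary relation
    set f : (EuclideanSpace ℝ (Fin n)) → ℝ := fun y =>
      (indicator Eᶜ (fun _ => (1 : ℝ)) y - indicator E (fun _ => (1 : ℝ)) y) *
        ‖x k - y‖ ^ (-r) with hfdef
    have hfabs : ∀ y : (EuclideanSpace ℝ (Fin n)), |f y| ≤ ‖x k - y‖ ^ (-r) := by
      intro y
      rw [hfdef, abs_mul, abs_of_nonneg (Real.rpow_nonneg (norm_nonneg _) _)]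
      have : |indicator Eᶜ (fun _ => (1 : ℝ)) y - indicator E (fun _ => (1 : ℝ)) y| ≤ 1 := by
        by_cases hyE : y ∈ E <;>
          simp [indicator_apply, hyE]
      calc |indicator Eᶜ (fun _ => (1 : ℝ)) y - indicator E (fun _ => (1 : ℝ)) y|
            * ‖x k - y‖ ^ (-r)
          ≤ 1 * ‖x k - y‖ ^ (-r) :=
            mul_le_mul_of_nonneg_right this (Real.rpow_nonneg (norm_nonneg _) _)
        _ = ‖x k - y‖ ^ (-r) := one_mul _
    have hfmeas : Measurable f := by
      refine Measurable.mul ?_ (hKm (x k))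
      exact ((measurable_const.indicator hE.compl).sub (measurable_const.indicator hE))
    have hfA : IntegrableOn f A :=
      Integrable.mono' hKAint hfmeas.aestronglyMeasurable
        (Eventually.of_forall fun y => by rw [Real.norm_eq_abs]; exact hfabs y)
    have hfB : IntegrableOn f B :=
      Integrable.mono' hKBint hfmeas.aestronglyMeasurable
        (Eventually.of_forall fun y => by rw [Real.norm_eq_abs]; exact hfabs y)
    -- split the zero integral
    have hdisj : Disjoint A B := Disjoint.mono_left inter_subset_right disjoint_sdiff_right
    have hsplit : (∫ y in A, f y) + (∫ y in B, f y) = 0 := by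
      rw [← setIntegral_union hdisj hBmeas hfA hfB, hAB]
      exact hzero k
    -- on A the integrand is minus the kernel
    have hfAval : (∫ y in A, f y) = -∫ y in A, ‖x k - y‖ ^ (-r) := by
      rw [← integral_neg]
      refine setIntegral_congr_fun hAmeas fun y hy => ?_
      have hyE : y ∈ E := hsub hy
      simp [hfdef, indicator_apply, hyE]
    -- the estimate
    have hint1 : (∫ y in A, ‖x k - y‖ ^ (-r)) = ∫ y in B, f y := by
      have := hsplit
      rw [hfAval] at this
      linarith
    have hint2 : (∫ y in B, f y) ≤ ∫ y in B, ‖x k - y‖ ^ (-r) :=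
      setIntegral_mono_on hfB hKBint hBmeas fun y _ => (le_abs_self _).trans (hfabs y)
    have hint3 : (∫ y in B, ‖x k - y‖ ^ (-r)) ≤ ∫ y in B, 2 ^ r * ‖y‖ ^ (-r) :=
      setIntegral_mono_on hKBint (IntegrableOn.mono_set (hG.const_mul (2 ^ r)) hBsub) hBmeas
        fun y hy => hKB y hy.2
    have hint4 : (∫ y in B, 2 ^ r * ‖y‖ ^ (-r)) ≤ Creal := by
      refine setIntegral_mono_set (hG.const_mul (2 ^ r)) ?_
        (HasSubset.Subset.eventuallyLE hBsub)
      filter_upwards with y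
      positivity
    have hfinal : (∫ y in A, ‖x k - y‖ ^ (-r)) ≤ Creal := by
      rw [hint1]; exact hint2.trans (hint3.trans hint4)
    -- pass to the lower Lebesgue integral
    have hconv : ENNReal.ofReal (∫ y in A, ‖x k - y‖ ^ (-r))
        = ∫⁻ y in A, ENNReal.ofReal (‖x k - y‖ ^ (-r)) :=
      ofReal_integral_eq_lintegral_ofReal hKAint
        (Eventually.of_forall fun y => Real.rpow_nonneg (norm_nonneg _) _)
    rw [← hconv]
    exact ENNReal.ofReal_le_ofReal hfinal
  -- eventually `‖x k‖ ≤ ρ / 2`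
  have hev : ∀ᶠ k in atTop, ‖x k‖ ≤ ρ / 2 := by
    have := hxt.eventually (Metric.closedBall_mem_nhds (0 : (EuclideanSpace ℝ (Fin n))) (by positivity : 0 < ρ / 2))
    filter_upwards [this] with k hk
    rwa [dist_zero_right] at hk
  have hev' : ∀ᶠ k in atTop,
      (∫⁻ y in A, ENNReal.ofReal (‖x k - y‖ ^ (-r))) ≤ ENNReal.ofReal Creal := by
    filter_upwards [hev] with k hk using hmain k hk
  -- Fatou
  have hFmeas : ∀ k, Measurable fun y : (EuclideanSpace ℝ (Fin n)) => ENNReal.ofReal (‖x k - y‖ ^ (-r)) := fun k =>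
    (hKm (x k)).ennreal_ofReal
  have hfatou := lintegral_liminf_le (μ := (volume : Measure (EuclideanSpace ℝ (Fin n))).restrict A) (u := atTop) hFmeas
  have hliminf : liminf (fun k => ∫⁻ y in A, ENNReal.ofReal (‖x k - y‖ ^ (-r))) atTop
      ≤ ENNReal.ofReal Creal := by
    calc liminf (fun k => ∫⁻ y in A, ENNReal.ofReal (‖x k - y‖ ^ (-r))) atTop
        ≤ liminf (fun _ : ℕ => ENNReal.ofReal Creal) atTop := liminf_le_liminf hev'
      _ = ENNReal.ofReal Creal := liminf_const _
  -- a.e. identification of the pointwise liminf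
  have hae : ∀ᵐ y ∂(volume : Measure (EuclideanSpace ℝ (Fin n))).restrict A,
      liminf (fun k => ENNReal.ofReal (‖x k - y‖ ^ (-r))) atTop
        = ENNReal.ofReal (‖y‖ ^ (-r)) := by
    have h0null : (volume : Measure (EuclideanSpace ℝ (Fin n))).restrict A {(0 : (EuclideanSpace ℝ (Fin n)))} = 0 :=
      le_antisymm (le_trans (Measure.restrict_apply_le _ _) (by simp)) zero_le
    have : ∀ᵐ y ∂(volume : Measure (EuclideanSpace ℝ (Fin n))).restrict A, y ≠ (0 : (EuclideanSpace ℝ (Fin n))) := by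
      rw [ae_iff]
      simpa using h0null
    filter_upwards [this] with y hy
    have h1 : Tendsto (fun k => ‖x k - y‖) atTop (nhds ‖y‖) := by
      have := (hxt.sub (tendsto_const_nhds : Tendsto (fun _ : ℕ => y) atTop (nhds y))).norm
      simpa using this
    have h2 : ContinuousAt (fun t : ℝ => t ^ (-r)) ‖y‖ :=
      Real.continuousAt_rpow_const _ _ (Or.inl (norm_ne_zero_iff.mpr hy))
    have h3 : Tendsto (fun k => ENNReal.ofReal (‖x k - y‖ ^ (-r))) atTop
        (nhds (ENNReal.ofReal (‖y‖ ^ (-r)))) :=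
      (ENNReal.continuous_ofReal.tendsto _).comp (h2.tendsto.comp h1)
    exact h3.liminf_eq
  calc (∫⁻ y in A, ENNReal.ofReal (‖y‖ ^ (-r)))
      = ∫⁻ y in A, liminf (fun k => ENNReal.ofReal (‖x k - y‖ ^ (-r))) atTop :=
        (lintegral_congr_ae hae).symm
    _ ≤ liminf (fun k => ∫⁻ y in A, ENNReal.ofReal (‖x k - y‖ ^ (-r))) atTop := hfatou
    _ ≤ ENNReal.ofReal Creal := hliminf
    _ < ⊤ := ENNReal.ofReal_lt_top
end
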